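/- Let A be a symmetric real n×n matrix with eigenvalue λ and corresponding eigenvector x. Then the 2n×2n block matrix M = [[A, I],[I, 0]] has eigenvalues μ = (λ + √(λ²+4))/2 and ν = (λ − √(λ²+4))/2, with corresponding eigenvectors (x, (2/(λ+√(λ²+4)))·x) and (x, (2/(λ−√(λ²+4)))·x) respectively. -/
import Mathlib

open Matrix in
lemma corona_aux {n : ℕ} (A : Matrix (Fin n) (Fin n) ℝ)
    (lam : ℝ) (x : Fin n → ℝ) (heig : A.mulVec x = lam • x)
    (c mu : ℝ) (h1 : lam + c = mu) (h2 : mu * c = 1) :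
    (Matrix.fromBlocks A 1 1 0).mulVec (Sum.elim x (c • x)) =
      mu • Sum.elim x (c • x) := by
  have h3 : (lam + c) * c = 1 := by rw [h1]; exact h2
  rw [Matrix.fromBlocks_mulVec]
  ext (i | i) <;>
    simp [heig, Matrix.one_mulVec, Matrix.zero_mulVec, ← h1, add_smul, smul_smul, h3,
      Pi.add_apply, Pi.smul_apply, smul_eq_mul, add_mul] <;>
    linear_combination (-x i) * h3

open Matrix in
/-- Eigenvalues/eigenvectors of the corona block matrix `[[A, I],[I, 0]]` arising from
an eigenpair `(lam, x)` of the symmetric matrix `A`. -/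
theorem stmt_4 {n : ℕ} (A : Matrix (Fin n) (Fin n) ℝ) (hA : A.transpose = A)
    (lam : ℝ) (x : Fin n → ℝ) (hx : x ≠ 0) (heig : A.mulVec x = lam • x) :
    (Matrix.fromBlocks A 1 1 0).mulVec
        (Sum.elim x ((2 / (lam + Real.sqrt (lam ^ 2 + 4))) • x)) =
      ((lam + Real.sqrt (lam ^ 2 + 4)) / 2) •
        Sum.elim x ((2 / (lam + Real.sqrt (lam ^ 2 + 4))) • x) ∧
    (Matrix.fromBlocks A 1 1 0).mulVec
        (Sum.elim x ((2 / (lam - Real.sqrt (lam ^ 2 + 4))) • x)) =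
      ((lam - Real.sqrt (lam ^ 2 + 4)) / 2) •
        Sum.elim x ((2 / (lam - Real.sqrt (lam ^ 2 + 4))) • x) := by
  set s := Real.sqrt (lam ^ 2 + 4) with hs
  have hs2 : s ^ 2 = lam ^ 2 + 4 := Real.sq_sqrt (by positivity)
  have hs0 : 0 ≤ s := Real.sqrt_nonneg _
  have hp : lam + s ≠ 0 := by
    intro h
    nlinarith [hs2]
  have hm : lam - s ≠ 0 := by
    intro h
    nlinarith [hs2]
  constructor
  · exact corona_aux A lam x heig _ _ (by field_simp; nlinarith [hs2]) (by field_simp)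
  · exact corona_aux A lam x heig _ _ (by field_simp; nlinarith [hs2]) (by field_simp)
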